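/- Let A ∈ C^{m×n} and B ∈ C^{n×ℓ} with A^[†] and B^[†] existing. Then rank([B B^[†] A^[†] A]) = rank([B A^[*]]), where the matrices are horizontal block concatenations. -/

import Mathlib

open Matrix

/-- The weighted (MN-) adjoint `A^[*] = N⁻¹ Aᴴ M` of a matrix between
indefinite inner product spaces with weights `M` (output) and `N` (input). -/
noncomputable def wadj {m n : ℕ} (M : Matrix (Fin m) (Fin m) ℂ)
    (N : Matrix (Fin n) (Fin n) ℂ) (A : Matrix (Fin m) (Fin n) ℂ) :
    Matrix (Fin n) (Fin m) ℂ := N⁻¹ * Aᴴ * M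

/-- `X` is the weighted Moore-Penrose inverse of `A` w.r.t. weights `M`, `N`:
the four weighted Penrose equations. -/
def IsWMP {m n : ℕ} (M : Matrix (Fin m) (Fin m) ℂ)
    (N : Matrix (Fin n) (Fin n) ℂ) (A : Matrix (Fin m) (Fin n) ℂ)
    (X : Matrix (Fin n) (Fin m) ℂ) : Prop :=
  A * X * A = A ∧ X * A * X = X ∧
    wadj M M (A * X) = A * X ∧ wadj N N (X * A) = X * A

theorem stmt_18 {m n l : ℕ} (M : Matrix (Fin m) (Fin m) ℂ) (N : Matrix (Fin n) (Fin n) ℂ)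
    (L : Matrix (Fin l) (Fin l) ℂ)
    (hM : M.IsHermitian) (hMu : IsUnit M) (hN : N.IsHermitian) (hNu : IsUnit N)
    (hL : L.IsHermitian) (hLu : IsUnit L)
    (A : Matrix (Fin m) (Fin n) ℂ) (B : Matrix (Fin n) (Fin l) ℂ)
    (X : Matrix (Fin n) (Fin m) ℂ) (Y : Matrix (Fin l) (Fin n) ℂ)
    (hX : IsWMP M N A X) (hY : IsWMP N L B Y) :
    (Matrix.fromCols (B * Y) (X * A)).rank =
      (Matrix.fromCols B (wadj M N A)).rank := by
  obtain ⟨hX1, hX2, hX3, hX4⟩ := hX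
  obtain ⟨hY1, hY2, hY3, hY4⟩ := hY
  have hMd : IsUnit M.det := (Matrix.isUnit_iff_isUnit_det M).mp hMu
  -- X * A = N⁻¹ * Aᴴ * Xᴴ * N
  have hXA : X * A = N⁻¹ * Aᴴ * Xᴴ * N := by
    conv_lhs => rw [← hX4]
    simp [wadj, Matrix.conjTranspose_mul, Matrix.mul_assoc]
  -- Claim 1 : X * A = wadj M N A * (M⁻¹ * Xᴴ * N)
  have hc1 : X * A = wadj M N A * (M⁻¹ * Xᴴ * N) := by
    rw [hXA, wadj]
    rw [show N⁻¹ * Aᴴ * M * (M⁻¹ * Xᴴ * N) = N⁻¹ * Aᴴ * (M * M⁻¹) * Xᴴ * N by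
      simp only [Matrix.mul_assoc], Matrix.mul_nonsing_inv _ hMd, Matrix.mul_one]
  -- Claim 2 : (X * A) * wadj M N A = wadj M N A
  have hNd : IsUnit N.det := (Matrix.isUnit_iff_isUnit_det N).mp hNu
  have hc2 : (X * A) * wadj M N A = wadj M N A := by
    rw [hXA, wadj]
    have : N⁻¹ * Aᴴ * Xᴴ * N * (N⁻¹ * Aᴴ * M) = N⁻¹ * (Aᴴ * Xᴴ * (N * N⁻¹) * Aᴴ) * M := by
      simp only [Matrix.mul_assoc]
    rw [this, Matrix.mul_nonsing_inv _ hNd, Matrix.mul_one]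
    have : Aᴴ * Xᴴ * Aᴴ = (A * X * A)ᴴ := by
      simp [Matrix.conjTranspose_mul, Matrix.mul_assoc]
    rw [this, hX1, Matrix.mul_assoc]
  apply le_antisymm
  · have : Matrix.fromCols (B * Y) (X * A) =
        Matrix.fromCols B (wadj M N A) * Matrix.fromBlocks Y 0 0 (M⁻¹ * Xᴴ * N) := by
      rw [Matrix.fromCols_mul_fromBlocks]
      simp [← hc1]
    rw [this]
    exact Matrix.rank_mul_le_left _ _
  · have : Matrix.fromCols B (wadj M N A) =
        Matrix.fromCols (B * Y) (X * A) * Matrix.fromBlocks B 0 0 (wadj M N A) := by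
      rw [Matrix.fromCols_mul_fromBlocks]
      simp [Matrix.mul_assoc, hY1, hc2]
    rw [this]
    exact Matrix.rank_mul_le_left _ _
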